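/- Let w = (a_1, ..., a_{2n}) be a sequence of integers and let s(w) = (a_2, ..., a_{2n}, a_1 + 4) be its slide. The map sending an arc configuration C = {(1, j_1)} ∪ {(i,j) : other arcs} of w to {(j_1 - 1, 2n)} ∪ {(i-1, j-1) : (i,j) ∈ C, i ≥ 2} is a bijection from the set of arc configurations of w onto the set of arc configurations of s(w); moreover it preserves the number of intersecting pairs of arcs and the number of reducible intersecting pairs (in particular, it maps irreducible configurations to irreducible configurations). -/

import Mathlib

/-- `C` is an arc configuration of the word `w = (w 1, ..., w (2n))`: a finite set of pairs
`(i, j)` with `1 ≤ i < j ≤ 2n` and `w j = w i + 2`, whose endpoints partition `{1, ..., 2n}`. -/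
def IsArcConfig (n : ℕ) (w : ℕ → ℤ) (C : Finset (ℕ × ℕ)) : Prop :=
  (∀ p ∈ C, 1 ≤ p.1 ∧ p.1 < p.2 ∧ p.2 ≤ 2 * n ∧ w p.2 = w p.1 + 2) ∧
  ∀ k, 1 ≤ k → k ≤ 2 * n → ∃! p, p ∈ C ∧ (p.1 = k ∨ p.2 = k)

/-- The slide `s(w) = (a_2, ..., a_{2n}, a_1 + 4)` of the word `w = (a_1, ..., a_{2n})`. -/
def slideWord (n : ℕ) (w : ℕ → ℤ) : ℕ → ℤ :=
  fun k => if k = 2 * n then w 1 + 4 else w (k + 1)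

/-- The induced map on arc configurations: `(1, j₁) ↦ (j₁ - 1, 2n)` and
`(i, j) ↦ (i - 1, j - 1)` for `i ≥ 2`. -/
def slideConf (n : ℕ) (C : Finset (ℕ × ℕ)) : Finset (ℕ × ℕ) :=
  C.image fun p => if p.1 = 1 then (p.2 - 1, 2 * n) else (p.1 - 1, p.2 - 1)

/-- The set of (ordered) pairs of intersecting arcs of `C`: pairs of arcs
`((i₁,j₁),(i₂,j₂))` with `i₁ < i₂ < j₁ < j₂`. -/
def interPairs (C : Finset (ℕ × ℕ)) : Finset ((ℕ × ℕ) × (ℕ × ℕ)) :=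
  (C ×ˢ C).filter fun pq => pq.1.1 < pq.2.1 ∧ pq.2.1 < pq.1.2 ∧ pq.1.2 < pq.2.2

/-- The set of pairs of reducibly intersecting arcs of `C` in the word `w`: pairs as above
with moreover `w i₂ ∈ {w i₁, w i₁ + 2}`. -/
def redPairs (w : ℕ → ℤ) (C : Finset (ℕ × ℕ)) : Finset ((ℕ × ℕ) × (ℕ × ℕ)) :=
  (C ×ˢ C).filter fun pq => pq.1.1 < pq.2.1 ∧ pq.2.1 < pq.1.2 ∧ pq.1.2 < pq.2.2 ∧
    (w pq.2.1 = w pq.1.1 ∨ w pq.2.1 = w pq.1.1 + 2)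

/-- An arc configuration is irreducible if it has no reducible intersections. -/
def IsIrreducibleConfig (w : ℕ → ℤ) (C : Finset (ℕ × ℕ)) : Prop :=
  ∀ p ∈ C, ∀ q ∈ C, p.1 < q.1 → q.1 < p.2 → p.2 < q.2 →
    w q.1 ≠ w p.1 ∧ w q.1 ≠ w p.1 + 2

namespace SlideAux

def fA (n : ℕ) (p : ℕ × ℕ) : ℕ × ℕ :=
  if p.1 = 1 then (p.2 - 1, 2 * n) else (p.1 - 1, p.2 - 1)

def gA (n : ℕ) (q : ℕ × ℕ) : ℕ × ℕ :=
  if q.2 = 2 * n then (1, q.1 + 1) else (q.1 + 1, q.2 + 1)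

def Arc (n : ℕ) (w : ℕ → ℤ) (p : ℕ × ℕ) : Prop :=
  1 ≤ p.1 ∧ p.1 < p.2 ∧ p.2 ≤ 2 * n ∧ w p.2 = w p.1 + 2

lemma slideConf_eq (n : ℕ) (C : Finset (ℕ × ℕ)) : slideConf n C = C.image (fA n) := rfl

lemma sw_lt (n : ℕ) (w : ℕ → ℤ) {k : ℕ} (h : k ≠ 2 * n) : slideWord n w k = w (k + 1) :=
  if_neg h

lemma sw_top (n : ℕ) (w : ℕ → ℤ) : slideWord n w (2 * n) = w 1 + 4 := if_pos rfl


lemma arc_f {n : ℕ} {w : ℕ → ℤ} {p : ℕ × ℕ} (hp : Arc n w p) :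
    Arc n (slideWord n w) (fA n p) := by
  obtain ⟨h1, h2, h3, h4⟩ := hp
  by_cases hp1 : p.1 = 1
  · refine ⟨?_, ?_, ?_, ?_⟩
    · simp [fA, hp1]; omega
    · simp [fA, hp1]; omega
    · simp [fA, hp1]
    · have e2 : (fA n p).2 = 2 * n := by simp [fA, hp1]
      have e1 : (fA n p).1 = p.2 - 1 := by simp [fA, hp1]
      rw [e1, e2, sw_top, sw_lt n w (by omega : p.2 - 1 ≠ 2 * n),
        show p.2 - 1 + 1 = p.2 from by omega, h4, hp1]
      ring
  · refine ⟨?_, ?_, ?_, ?_⟩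
    · simp [fA, hp1]; omega
    · simp [fA, hp1]; omega
    · simp [fA, hp1]; omega
    · have e1 : (fA n p).1 = p.1 - 1 := by simp [fA, hp1]
      have e2 : (fA n p).2 = p.2 - 1 := by simp [fA, hp1]
      rw [e1, e2, sw_lt n w (by omega : p.2 - 1 ≠ 2 * n),
        sw_lt n w (by omega : p.1 - 1 ≠ 2 * n),
        show p.2 - 1 + 1 = p.2 from by omega, show p.1 - 1 + 1 = p.1 from by omega, h4]

lemma arc_g {n : ℕ} {w : ℕ → ℤ} {q : ℕ × ℕ} (hq : Arc n (slideWord n w) q) :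
    Arc n w (gA n q) := by
  obtain ⟨h1, h2, h3, h4⟩ := hq
  by_cases hq2 : q.2 = 2 * n
  · refine ⟨?_, ?_, ?_, ?_⟩
    · simp [gA, hq2]
    · simp [gA, hq2] <;> omega
    · simp [gA, hq2] <;> omega
    · have e1 : (gA n q).1 = 1 := by simp [gA, hq2]
      have e2 : (gA n q).2 = q.1 + 1 := by simp [gA, hq2]
      rw [hq2, sw_top, sw_lt n w (by omega : q.1 ≠ 2 * n)] at h4
      rw [e1, e2]; linarith
  · refine ⟨?_, ?_, ?_, ?_⟩
    · simp [gA, hq2] <;> omega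
    · simp [gA, hq2] <;> omega
    · simp [gA, hq2] <;> omega
    · have e1 : (gA n q).1 = q.1 + 1 := by simp [gA, hq2]
      have e2 : (gA n q).2 = q.2 + 1 := by simp [gA, hq2]
      rw [sw_lt n w hq2, sw_lt n w (by omega : q.1 ≠ 2 * n)] at h4
      rw [e1, e2, h4]

lemma gf {n : ℕ} {w : ℕ → ℤ} {p : ℕ × ℕ} (hp : Arc n w p) : gA n (fA n p) = p := by
  obtain ⟨h1, h2, h3, h4⟩ := hp
  by_cases hp1 : p.1 = 1
  · simp [fA, gA, hp1, Prod.ext_iff] <;> omega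
  · have hne : p.2 - 1 ≠ 2 * n := by omega
    simp [fA, gA, hp1, hne, Prod.ext_iff] <;> omega

lemma fg {n : ℕ} {w : ℕ → ℤ} {q : ℕ × ℕ} (hq : Arc n (slideWord n w) q) :
    fA n (gA n q) = q := by
  obtain ⟨h1, h2, h3, h4⟩ := hq
  by_cases hq2 : q.2 = 2 * n
  · simp [fA, gA, hq2, Prod.ext_iff] <;> omega
  · have hne : q.1 + 1 ≠ 1 := by omega
    simp [fA, gA, hq2, hne, Prod.ext_iff] <;> omega

lemma cover_f {n : ℕ} {w : ℕ → ℤ} {p : ℕ × ℕ} (hp : Arc n w p) {k k' : ℕ}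
    (hk1 : 1 ≤ k) (hk2 : k ≤ 2 * n) (hk' : k' = if k = 2 * n then 1 else k + 1) :
    ((fA n p).1 = k ∨ (fA n p).2 = k) ↔ (p.1 = k' ∨ p.2 = k') := by
  obtain ⟨h1, h2, h3, h4⟩ := hp
  subst hk'
  by_cases hp1 : p.1 = 1 <;> by_cases hk2n : k = 2 * n <;>
    simp [fA, hp1, hk2n] <;> omega

lemma cover_g {n : ℕ} {w : ℕ → ℤ} {q : ℕ × ℕ} (hq : Arc n (slideWord n w) q) {k k' : ℕ}
    (hk1 : 1 ≤ k) (hk2 : k ≤ 2 * n) (hk' : k' = if k = 1 then 2 * n else k - 1) :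
    ((gA n q).1 = k ∨ (gA n q).2 = k) ↔ (q.1 = k' ∨ q.2 = k') := by
  obtain ⟨h1, h2, h3, h4⟩ := hq
  subst hk'
  by_cases hq2 : q.2 = 2 * n <;> by_cases hk1' : k = 1 <;>
    simp [gA, hq2, hk1'] <;> omega

end SlideAux

namespace SlideAux

lemma conf_arc {n : ℕ} {w : ℕ → ℤ} {C : Finset (ℕ × ℕ)} (hC : IsArcConfig n w C)
    {p : ℕ × ℕ} (hp : p ∈ C) : Arc n w p := hC.1 p hp

lemma forward {n : ℕ} {w : ℕ → ℤ} {C : Finset (ℕ × ℕ)} (hC : IsArcConfig n w C) :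
    IsArcConfig n (slideWord n w) (slideConf n C) := by
  constructor
  · intro q hq
    rw [slideConf_eq, Finset.mem_image] at hq
    obtain ⟨p, hp, rfl⟩ := hq
    exact arc_f (conf_arc hC hp)
  · intro k hk1 hk2
    have hk'1 : 1 ≤ (if k = 2 * n then 1 else k + 1) := by split <;> omega
    have hk'2 : (if k = 2 * n then 1 else k + 1) ≤ 2 * n := by split <;> omega
    obtain ⟨p, ⟨hpC, hpcov⟩, hpu⟩ := hC.2 _ hk'1 hk'2
    refine ⟨fA n p, ⟨?_, ?_⟩, ?_⟩
    · rw [slideConf_eq]; exact Finset.mem_image_of_mem _ hpC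
    · exact (cover_f (conf_arc hC hpC) hk1 hk2 rfl).2 hpcov
    · rintro q ⟨hqC, hqcov⟩
      rw [slideConf_eq, Finset.mem_image] at hqC
      obtain ⟨p', hp', rfl⟩ := hqC
      rw [hpu p' ⟨hp', (cover_f (conf_arc hC hp') hk1 hk2 rfl).1 hqcov⟩]

lemma backward {n : ℕ} {w : ℕ → ℤ} {C' : Finset (ℕ × ℕ)}
    (hC' : IsArcConfig n (slideWord n w) C') :
    IsArcConfig n w (C'.image (gA n)) := by
  constructor
  · intro p hp
    rw [Finset.mem_image] at hp
    obtain ⟨q, hq, rfl⟩ := hp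
    exact arc_g (conf_arc hC' hq)
  · intro k hk1 hk2
    have hk'1 : 1 ≤ (if k = 1 then 2 * n else k - 1) := by split <;> omega
    have hk'2 : (if k = 1 then 2 * n else k - 1) ≤ 2 * n := by split <;> omega
    obtain ⟨q, ⟨hqC, hqcov⟩, hqu⟩ := hC'.2 _ hk'1 hk'2
    refine ⟨gA n q, ⟨Finset.mem_image_of_mem _ hqC, ?_⟩, ?_⟩
    · exact (cover_g (conf_arc hC' hqC) hk1 hk2 rfl).2 hqcov
    · rintro p ⟨hpC, hpcov⟩
      rw [Finset.mem_image] at hpC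
      obtain ⟨q', hq', rfl⟩ := hpC
      rw [hqu q' ⟨hq', (cover_g (conf_arc hC' hq') hk1 hk2 rfl).1 hpcov⟩]

lemma slide_image_g {n : ℕ} {w : ℕ → ℤ} {C : Finset (ℕ × ℕ)} (hC : IsArcConfig n w C) :
    (slideConf n C).image (gA n) = C := by
  rw [slideConf_eq, Finset.image_image]
  have : C.image (gA n ∘ fA n) = C.image id :=
    Finset.image_congr (fun p hp => gf (conf_arc hC hp))
  rw [this, Finset.image_id]

lemma slide_of_image_g {n : ℕ} {w : ℕ → ℤ} {C' : Finset (ℕ × ℕ)}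
    (hC' : IsArcConfig n (slideWord n w) C') :
    slideConf n (C'.image (gA n)) = C' := by
  rw [slideConf_eq, Finset.image_image]
  have : C'.image (fA n ∘ gA n) = C'.image id :=
    Finset.image_congr (fun q hq => fg (conf_arc hC' hq))
  rw [this, Finset.image_id]

end SlideAux

namespace SlideAux

lemma val_f1 {n : ℕ} {w : ℕ → ℤ} {p : ℕ × ℕ} (hp : Arc n w p) (h1 : p.1 = 1) :
    slideWord n w ((fA n p).1) = w 1 + 2 := by
  obtain ⟨a1, a2, a3, a4⟩ := hp
  have e : (fA n p).1 = p.2 - 1 := by simp [fA, h1]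
  rw [e, sw_lt n w (by omega : p.2 - 1 ≠ 2 * n), show p.2 - 1 + 1 = p.2 from by omega, a4, h1]

lemma val_f2 {n : ℕ} {w : ℕ → ℤ} {p : ℕ × ℕ} (hp : Arc n w p) (h1 : p.1 ≠ 1) :
    slideWord n w ((fA n p).1) = w p.1 := by
  obtain ⟨a1, a2, a3, a4⟩ := hp
  have e : (fA n p).1 = p.1 - 1 := by simp [fA, h1]
  rw [e, sw_lt n w (by omega : p.1 - 1 ≠ 2 * n), show p.1 - 1 + 1 = p.1 from by omega]

lemma pairs_card {n : ℕ} {w : ℕ → ℤ} {C : Finset (ℕ × ℕ)} (hC : IsArcConfig n w C) :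
    (interPairs C).card = (interPairs (slideConf n C)).card ∧
    (redPairs w C).card = (redPairs (slideWord n w) (slideConf n C)).card := by
  classical
  have hC' := forward hC
  set C' := slideConf n C with hC'def
  set F : (ℕ × ℕ) × (ℕ × ℕ) → (ℕ × ℕ) × (ℕ × ℕ) :=
    fun pq => if pq.1.1 = 1 then (fA n pq.2, fA n pq.1) else (fA n pq.1, fA n pq.2) with hF
  set G : (ℕ × ℕ) × (ℕ × ℕ) → (ℕ × ℕ) × (ℕ × ℕ) :=
    fun PQ => if PQ.2.2 = 2 * n then (gA n PQ.2, gA n PQ.1) else (gA n PQ.1, gA n PQ.2) with hG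
  have fmem : ∀ p ∈ C, fA n p ∈ C' := fun p hp => by
    rw [hC'def, slideConf_eq]; exact Finset.mem_image_of_mem _ hp
  have gmem : ∀ P ∈ C', gA n P ∈ C := by
    intro P hP
    rw [hC'def, slideConf_eq, Finset.mem_image] at hP
    obtain ⟨p, hp, rfl⟩ := hP
    rw [gf (conf_arc hC hp)]; exact hp
  have left : ∀ p ∈ C, ∀ q ∈ C, p.1 < q.1 → G (F (p, q)) = (p, q) := by
    intro p hp q hq hlt
    have Ap := conf_arc hC hp
    have Aq := conf_arc hC hq
    have hq1 : q.1 ≠ 1 := by obtain ⟨a, b, c, d⟩ := Ap; omega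
    by_cases hp1 : p.1 = 1
    · have e : (fA n p).2 = 2 * n := by simp [fA, hp1]
      simp [hF, hG, hp1, hq1, e, gf Ap, gf Aq]
    · have e : (fA n q).2 ≠ 2 * n := by
        obtain ⟨b1, b2, b3, b4⟩ := Aq; simp [fA, hq1]; omega
      simp [hF, hG, hp1, e, gf Ap, gf Aq]
  have right : ∀ P ∈ C', ∀ Q ∈ C', P.2 < Q.2 → F (G (P, Q)) = (P, Q) := by
    intro P hP Q hQ hlt
    have AP := conf_arc hC' hP
    have AQ := conf_arc hC' hQ
    obtain ⟨a1, a2, a3, a4⟩ := id AP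
    obtain ⟨b1, b2, b3, b4⟩ := id AQ
    by_cases hQ2 : Q.2 = 2 * n
    · have e : (gA n Q).1 = 1 := by simp [gA, hQ2]
      simp [hG, hF, hQ2, e, fg AP, fg AQ]
    · have eP : P.2 ≠ 2 * n := by omega
      have e : (gA n P).1 ≠ 1 := by simp [gA, eP]; omega
      simp [hG, hF, hQ2, e, fg AP, fg AQ]
  have hi_inter : ∀ a ∈ interPairs C, F a ∈ interPairs C' := by
    rintro ⟨p, q⟩ ha
    simp only [interPairs, Finset.mem_filter, Finset.mem_product] at ha
    obtain ⟨⟨hp, hq⟩, l1, l2, l3⟩ := ha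
    obtain ⟨a1, a2, a3, a4⟩ := conf_arc hC hp
    obtain ⟨b1, b2, b3, b4⟩ := conf_arc hC hq
    have hq1 : q.1 ≠ 1 := by omega
    by_cases hp1 : p.1 = 1
    · have e : F (p, q) = (fA n q, fA n p) := by simp [hF, hp1]
      rw [e]
      simp only [interPairs, Finset.mem_filter, Finset.mem_product]
      refine ⟨⟨fmem q hq, fmem p hp⟩, ?_⟩
      simp [fA, hp1, hq1] <;> omega
    · have e : F (p, q) = (fA n p, fA n q) := by simp [hF, hp1]
      rw [e]
      simp only [interPairs, Finset.mem_filter, Finset.mem_product]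
      refine ⟨⟨fmem p hp, fmem q hq⟩, ?_⟩
      simp [fA, hp1, hq1] <;> omega
  have hj_inter : ∀ a ∈ interPairs C', G a ∈ interPairs C := by
    rintro ⟨P, Q⟩ ha
    simp only [interPairs, Finset.mem_filter, Finset.mem_product] at ha
    obtain ⟨⟨hP, hQ⟩, l1, l2, l3⟩ := ha
    obtain ⟨a1, a2, a3, a4⟩ := conf_arc hC' hP
    obtain ⟨b1, b2, b3, b4⟩ := conf_arc hC' hQ
    have eP : P.2 ≠ 2 * n := by omega
    by_cases hQ2 : Q.2 = 2 * n
    · have e : G (P, Q) = (gA n Q, gA n P) := by simp [hG, hQ2]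
      rw [e]
      simp only [interPairs, Finset.mem_filter, Finset.mem_product]
      refine ⟨⟨gmem Q hQ, gmem P hP⟩, ?_⟩
      simp [gA, hQ2, eP] <;> omega
    · have e : G (P, Q) = (gA n P, gA n Q) := by simp [hG, hQ2]
      rw [e]
      simp only [interPairs, Finset.mem_filter, Finset.mem_product]
      refine ⟨⟨gmem P hP, gmem Q hQ⟩, ?_⟩
      simp [gA, hQ2, eP] <;> omega
  have hi_red : ∀ a ∈ redPairs w C, F a ∈ redPairs (slideWord n w) C' := by
    rintro ⟨p, q⟩ ha
    simp only [redPairs, Finset.mem_filter, Finset.mem_product] at ha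
    obtain ⟨⟨hp, hq⟩, l1, l2, l3, l4⟩ := ha
    have Ap := conf_arc hC hp
    have Aq := conf_arc hC hq
    obtain ⟨a1, a2, a3, a4⟩ := conf_arc hC hp
    obtain ⟨b1, b2, b3, b4⟩ := conf_arc hC hq
    have hq1 : q.1 ≠ 1 := by omega
    by_cases hp1 : p.1 = 1
    · have e : F (p, q) = (fA n q, fA n p) := by simp [hF, hp1]
      rw [e]
      simp only [redPairs, Finset.mem_filter, Finset.mem_product]
      refine ⟨⟨fmem q hq, fmem p hp⟩, ?_, ?_, ?_, ?_⟩
      · simp [fA, hp1, hq1] <;> omega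
      · simp [fA, hp1, hq1] <;> omega
      · simp [fA, hp1, hq1] <;> omega
      · rw [val_f1 Ap hp1, val_f2 Aq hq1]
        rw [hp1] at l4
        rcases l4 with h | h
        · right; rw [h]
        · left; rw [h]
    · have e : F (p, q) = (fA n p, fA n q) := by simp [hF, hp1]
      rw [e]
      simp only [redPairs, Finset.mem_filter, Finset.mem_product]
      refine ⟨⟨fmem p hp, fmem q hq⟩, ?_, ?_, ?_, ?_⟩
      · simp [fA, hp1, hq1] <;> omega
      · simp [fA, hp1, hq1] <;> omega
      · simp [fA, hp1, hq1] <;> omega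
      · rw [val_f2 Ap hp1, val_f2 Aq hq1]
        exact l4
  have hj_red : ∀ a ∈ redPairs (slideWord n w) C', G a ∈ redPairs w C := by
    rintro ⟨P, Q⟩ ha
    simp only [redPairs, Finset.mem_filter, Finset.mem_product] at ha
    obtain ⟨⟨hP, hQ⟩, l1, l2, l3, l4⟩ := ha
    obtain ⟨a1, a2, a3, a4⟩ := conf_arc hC' hP
    obtain ⟨b1, b2, b3, b4⟩ := conf_arc hC' hQ
    have eP : P.2 ≠ 2 * n := by omega
    have vP : slideWord n w P.1 = w (P.1 + 1) := sw_lt n w (by omega)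
    have vQ : slideWord n w Q.1 = w (Q.1 + 1) := sw_lt n w (by omega)
    rw [vP, vQ] at l4
    by_cases hQ2 : Q.2 = 2 * n
    · have e : G (P, Q) = (gA n Q, gA n P) := by simp [hG, hQ2]
      rw [e]
      simp only [redPairs, Finset.mem_filter, Finset.mem_product]
      refine ⟨⟨gmem Q hQ, gmem P hP⟩, ?_, ?_, ?_, ?_⟩
      · simp [gA, hQ2, eP] <;> omega
      · simp [gA, hQ2, eP] <;> omega
      · simp [gA, hQ2, eP] <;> omega
      · have e1 : (gA n P).1 = P.1 + 1 := by simp [gA, eP]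
        have e2 : (gA n Q).1 = 1 := by simp [gA, hQ2]
        rw [e1, e2]
        have hb : w (Q.1 + 1) = w 1 + 2 := by
          rw [hQ2, sw_top, vQ] at b4; linarith
        rw [hb] at l4
        rcases l4 with h | h
        · right; linarith
        · left; linarith
    · have e : G (P, Q) = (gA n P, gA n Q) := by simp [hG, hQ2]
      rw [e]
      simp only [redPairs, Finset.mem_filter, Finset.mem_product]
      refine ⟨⟨gmem P hP, gmem Q hQ⟩, ?_, ?_, ?_, ?_⟩
      · simp [gA, hQ2, eP] <;> omega
      · simp [gA, hQ2, eP] <;> omega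
      · simp [gA, hQ2, eP] <;> omega
      · have e1 : (gA n P).1 = P.1 + 1 := by simp [gA, eP]
        have e2 : (gA n Q).1 = Q.1 + 1 := by simp [gA, hQ2]
        rw [e1, e2]
        exact l4
  constructor
  · refine Finset.card_nbij' F G hi_inter hj_inter ?_ ?_
    · rintro ⟨p, q⟩ ha
      simp only [Finset.mem_coe, interPairs, Finset.mem_filter, Finset.mem_product] at ha
      exact left p ha.1.1 q ha.1.2 ha.2.1
    · rintro ⟨P, Q⟩ ha
      simp only [Finset.mem_coe, interPairs, Finset.mem_filter, Finset.mem_product] at ha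
      exact right P ha.1.1 Q ha.1.2 ha.2.2.2
  · refine Finset.card_nbij' F G hi_red hj_red ?_ ?_
    · rintro ⟨p, q⟩ ha
      simp only [Finset.mem_coe, redPairs, Finset.mem_filter, Finset.mem_product] at ha
      exact left p ha.1.1 q ha.1.2 ha.2.1
    · rintro ⟨P, Q⟩ ha
      simp only [Finset.mem_coe, redPairs, Finset.mem_filter, Finset.mem_product] at ha
      exact right P ha.1.1 Q ha.1.2 ha.2.2.2.1

lemma red_empty_iff {w : ℕ → ℤ} {C : Finset (ℕ × ℕ)} :
    redPairs w C = ∅ ↔ IsIrreducibleConfig w C := by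
  simp only [redPairs, Finset.filter_eq_empty_iff, Finset.mem_product, IsIrreducibleConfig]
  constructor
  · intro h p hp q hq h1 h2 h3
    constructor
    · intro he; exact h (x := (p, q)) ⟨hp, hq⟩ ⟨h1, h2, h3, Or.inl he⟩
    · intro he; exact h (x := (p, q)) ⟨hp, hq⟩ ⟨h1, h2, h3, Or.inr he⟩
  · rintro h ⟨p, q⟩ ⟨hp, hq⟩ ⟨h1, h2, h3, h4 | h4⟩
    · exact (h p hp q hq h1 h2 h3).1 h4
    · exact (h p hp q hq h1 h2 h3).2 h4

end SlideAux

/-- The slide map is a bijection from arc configurations of `w` to arc configurations of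
`s(w)` preserving the number of intersecting pairs of arcs and the number of reducible
intersecting pairs; in particular it maps irreducible configurations to irreducible ones. -/
theorem slideConf_bijection (n : ℕ) (w : ℕ → ℤ) :
    (∀ C, IsArcConfig n w C → IsArcConfig n (slideWord n w) (slideConf n C)) ∧
    (∀ C', IsArcConfig n (slideWord n w) C' →
      ∃! C, IsArcConfig n w C ∧ slideConf n C = C') ∧
    (∀ C, IsArcConfig n w C →
      (interPairs C).card = (interPairs (slideConf n C)).card ∧
      (redPairs w C).card = (redPairs (slideWord n w) (slideConf n C)).card ∧
      (IsIrreducibleConfig w C → IsIrreducibleConfig (slideWord n w) (slideConf n C))) := by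
  refine ⟨fun C hC => SlideAux.forward hC, ?_, ?_⟩
  · intro C' hC'
    refine ⟨C'.image (SlideAux.gA n),
      ⟨SlideAux.backward hC', SlideAux.slide_of_image_g hC'⟩, ?_⟩
    rintro C ⟨hC, rfl⟩
    exact (SlideAux.slide_image_g hC).symm
  · intro C hC
    obtain ⟨h1, h2⟩ := SlideAux.pairs_card hC
    refine ⟨h1, h2, ?_⟩
    intro hirr
    rw [← SlideAux.red_empty_iff] at hirr ⊢
    have hcard : (redPairs (slideWord n w) (slideConf n C)).card = 0 := by
      rw [← h2, hirr]; simp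
    exact Finset.card_eq_zero.1 hcard
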